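/- (Sufficiency in the characterization of partially feasible mechanisms.) Let π : Q × T → [0,1] be measurable and P_b : T → ℝ. If (i) R^π is nondecreasing on T, (ii) U(t) = U(t̲) + ∫_{t̲}^{t} R^π(x)dx for all t ∈ T, and (iii) U(t̲) ≥ 0, then U(t) ≥ 0 for all t ∈ T and U(t) ≥ U(t'; t) for all t, t' ∈ T. -/
import Mathlib


open MeasureTheory Set

theorem stmt_7
    (tlo thi qlo qhi : ℝ) (htT : tlo < thi) (hqQ : qlo < qhi)
    (G g : ℝ → ℝ)
    (hG : ∀ q ∈ Icc qlo qhi, HasDerivAt G (g q) q)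
    (hgpos : ∀ q ∈ Icc qlo qhi, 0 < g q)
    (hgint : IntervalIntegrable g volume qlo qhi)
    (α α' : ℝ → ℝ)
    (hα : ∀ q ∈ Icc qlo qhi, HasDerivAt α (α' q) q)
    (hαpos : ∀ q ∈ Icc qlo qhi, 0 < α q)
    (π : ℝ → ℝ → ℝ) (hπmeas : Measurable (Function.uncurry π))
    (hπ01 : ∀ q t, π q t ∈ Icc (0:ℝ) 1)
    (Pb : ℝ → ℝ)
    (Rπ : ℝ → ℝ) (hRπ : ∀ t, Rπ t = ∫ q in qlo..qhi, α q * π q t * g q)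
    (U : ℝ → ℝ) (hU : ∀ t, U t = ∫ q in qlo..qhi, π q t * (α q * t - Pb t) * g q)
    (Umis : ℝ → ℝ → ℝ)
    (hUmisDef : ∀ t' t, Umis t' t = ∫ q in qlo..qhi, π q t' * (α q * t - Pb t') * g q)
    (hmono : MonotoneOn Rπ (Icc tlo thi))
    (henv : ∀ t ∈ Icc tlo thi, U t = U tlo + ∫ x in tlo..t, Rπ x)
    (h0 : 0 ≤ U tlo)
    :
    (∀ t ∈ Icc tlo thi, 0 ≤ U t) ∧
      ∀ t ∈ Icc tlo thi, ∀ t' ∈ Icc tlo thi, Umis t' t ≤ U t := by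
  have hqle : qlo ≤ qhi := hqQ.le
  -- Rπ is nonnegative
  have hRnn : ∀ s, 0 ≤ Rπ s := by
    intro s
    rw [hRπ]
    exact intervalIntegral.integral_nonneg hqle fun q hq =>
      mul_nonneg (mul_nonneg (hαpos q hq).le (hπ01 q s).1) (hgpos q hq).le
  -- Part 1
  have part1 : ∀ t ∈ Icc tlo thi, 0 ≤ U t := by
    intro t ht
    rw [henv t ht]
    have : 0 ≤ ∫ x in tlo..t, Rπ x :=
      intervalIntegral.integral_nonneg ht.1 fun x _ => hRnn x
    linarith
  refine ⟨part1, ?_⟩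
  -- measurability facts on Ioc qlo qhi
  have hαcont : ContinuousOn α (Icc qlo qhi) := fun q hq =>
    (hα q hq).continuousAt.continuousWithinAt
  obtain ⟨q0, hq0, hq0max⟩ :=
    isCompact_Icc.exists_isMaxOn (nonempty_Icc.2 hqle) hαcont
  set Cα := α q0 with hCα
  have hCαpos : 0 < Cα := hαpos q0 hq0
  set C := max Cα 1 with hCdef
  have hCα1 : Cα ≤ C := le_max_left _ _
  have hC1 : (1:ℝ) ≤ C := le_max_right _ _
  have hres : volume.restrict (Ioc qlo qhi) ≤ volume.restrict (Icc qlo qhi) :=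
    Measure.restrict_mono Ioc_subset_Icc_self le_rfl
  have hαm : AEStronglyMeasurable α (volume.restrict (Ioc qlo qhi)) :=
    (hαcont.aestronglyMeasurable measurableSet_Icc).mono_measure hres
  have hgm : AEStronglyMeasurable g (volume.restrict (Ioc qlo qhi)) := by
    have := hgint.1
    exact this.aestronglyMeasurable
  have hπm : ∀ s, AEStronglyMeasurable (fun q => π q s)
      (volume.restrict (Ioc qlo qhi)) := by
    intro s
    exact (hπmeas.comp (measurable_id.prodMk measurable_const)).aestronglyMeasurable
  have huIoc : uIoc qlo qhi = Ioc qlo qhi := uIoc_of_le hqle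
  -- integrability of the two basic integrands
  have hmajor : IntervalIntegrable (fun q => C * |g q|) volume qlo qhi :=
    hgint.abs.const_mul C
  have hbnd : ∀ (f : ℝ → ℝ),
      AEStronglyMeasurable f (volume.restrict (Ioc qlo qhi)) →
      (∀ q ∈ Icc qlo qhi, |f q| ≤ C * |g q|) →
      IntervalIntegrable f volume qlo qhi := by
    intro f hfm hfb
    refine hmajor.mono_fun (by rwa [huIoc]) ?_
    rw [huIoc]
    refine (ae_restrict_iff' measurableSet_Ioc).2 (Filter.Eventually.of_forall ?_)
    intro q hq
    have h1 := hfb q (Ioc_subset_Icc_self hq)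
    simp only [Real.norm_eq_abs]
    exact h1.trans (le_abs_self _)
  have hint1 : ∀ s, IntervalIntegrable (fun q => α q * π q s * g q) volume qlo qhi := by
    intro s
    refine hbnd _ ((hαm.mul (hπm s)).mul hgm) ?_
    intro q hq
    have hα1 : 0 ≤ α q := (hαpos q hq).le
    have hα2 : α q ≤ Cα := hq0max hq
    have hπ1 := hπ01 q s
    rw [abs_mul, abs_mul]
    have : |α q * π q s| ≤ C := by
      rw [abs_mul, abs_of_nonneg hα1, abs_of_nonneg hπ1.1]
      calc α q * π q s ≤ α q * 1 := by nlinarith [hπ1.2]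
        _ ≤ C := by linarith
    calc |α q| * |π q s| * |g q| = |α q * π q s| * |g q| := by rw [abs_mul]
      _ ≤ C * |g q| := by
          apply mul_le_mul_of_nonneg_right this (abs_nonneg _)
  have hint0 : ∀ s, IntervalIntegrable (fun q => π q s * g q) volume qlo qhi := by
    intro s
    refine hbnd _ ((hπm s).mul hgm) ?_
    intro q hq
    have hπ1 := hπ01 q s
    rw [abs_mul]
    have h1 : |π q s| ≤ 1 := by rw [abs_of_nonneg hπ1.1]; exact hπ1.2
    calc |π q s| * |g q| ≤ 1 * |g q| :=
        mul_le_mul_of_nonneg_right h1 (abs_nonneg _)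
      _ ≤ C * |g q| := by nlinarith [abs_nonneg (g q)]
  -- splitting lemma
  have hsplit : ∀ s c, (∫ q in qlo..qhi, π q s * (α q * c - Pb s) * g q)
      = c * Rπ s - Pb s * (∫ q in qlo..qhi, π q s * g q) := by
    intro s c
    rw [hRπ, ← intervalIntegral.integral_const_mul,
      ← intervalIntegral.integral_const_mul,
      ← intervalIntegral.integral_sub ((hint1 s).const_mul c) ((hint0 s).const_mul (Pb s))]
    congr 1
    funext q
    ring
  have hmis : ∀ t' t, Umis t' t = U t' + (t - t') * Rπ t' := by
    intro t' t
    rw [hUmisDef, hU, hsplit, hsplit]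
    ring
  intro t ht t' ht'
  rw [hmis]
  -- integrability of Rπ on subintervals
  have hRint : ∀ a, a ∈ Icc tlo thi → ∀ b, b ∈ Icc tlo thi →
      IntervalIntegrable Rπ volume a b := by
    intro a ha b hb
    exact (hmono.mono (uIcc_subset_Icc ha hb)).intervalIntegrable
  have hUdiff : U t - U t' = ∫ x in t'..t, Rπ x := by
    rw [henv t ht, henv t' ht']
    have := intervalIntegral.integral_add_adjacent_intervals
      (hRint tlo (left_mem_Icc.2 htT.le) t' ht') (hRint t' ht' t ht)
    linarith
  have key : (t - t') * Rπ t' ≤ ∫ x in t'..t, Rπ x := by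
    rcases le_total t' t with h | h
    · have hmono' : ∀ x ∈ Icc t' t, Rπ t' ≤ Rπ x := by
        intro x hx
        exact hmono ht' ⟨le_trans ht'.1 hx.1, le_trans hx.2 ht.2⟩ hx.1
      have := intervalIntegral.integral_mono_on h
        (intervalIntegrable_const (c := Rπ t')) (hRint t' ht' t ht) hmono'
      rw [intervalIntegral.integral_const] at this
      simpa using this
    · have hmono' : ∀ x ∈ Icc t t', Rπ x ≤ Rπ t' := by
        intro x hx
        exact hmono ⟨le_trans ht.1 hx.1, le_trans hx.2 ht'.2⟩ ht' hx.2
      have h2 := intervalIntegral.integral_mono_on h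
        (hRint t ht t' ht') (intervalIntegrable_const (c := Rπ t')) hmono'
      rw [intervalIntegral.integral_const] at h2
      rw [intervalIntegral.integral_symm t t']
      simp only [smul_eq_mul] at h2
      nlinarith
  linarith
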